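/- Let n ≥ 1, let b ⊆ ZMod n with |b| = k, let L ⊆ ZMod n with |L| = l, and let G(b) = {b + i : i ∈ ZMod n} be the set of distinct cyclic shifts of b (where b + i = {x + i : x ∈ b}). Then n · |{c ∈ G(b) : c ∩ L ≠ ∅}| ≤ k · l · |G(b)|; that is, the fraction r of distinct shifts that intersect L satisfies r ≤ kl/n. -/
import Mathlib


/-- In the `k`-modulus method, the fraction of the distinct cyclic shifts
`G(b) = {b + i : i ∈ ZMod n}` of a size-`k` base subset `b` that intersect the
corrupted set `L` of size `l` is at most `k·l/n`. -/
theorem frac_corrupt_distinct_shifts_le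
    (n : ℕ) [NeZero n] (k l : ℕ) (b : Finset (ZMod n)) (hb : b.card = k)
    (L : Finset (ZMod n)) (hL : L.card = l) :
    n * ((Finset.univ.image fun i : ZMod n => b.image (· + i)).filter
          fun c => c ∩ L ≠ ∅).card
      ≤ k * l * (Finset.univ.image fun i : ZMod n => b.image (· + i)).card := by
  classical
  set f : ZMod n → Finset (ZMod n) := fun i => b.image (· + i) with hf
  have htrans : ∀ (i j : ZMod n), f (i + j) = (f i).image (· + j) := by
    intro i j
    simp only [hf, Finset.image_image]
    congr 1
    ext x
    simp [add_assoc]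
  have hiff : ∀ i j : ZMod n, f i = f j ↔ f (i - j) = f 0 := by
    intro i j
    have h1 : (f (i - j)).image (· + j) = f i := by
      rw [← htrans]; ring_nf
    have h2 : (f 0).image (· + j) = f j := by
      rw [← htrans]; ring_nf
    constructor
    · intro h
      apply Finset.image_injective (f := fun x : ZMod n => x + j)
        (fun a c hac => by simpa using hac)
      rw [h1, h2, h]
    · intro h
      rw [← h1, ← h2, h]
  set G : Finset (Finset (ZMod n)) := Finset.univ.image f with hG
  set S : Finset (ZMod n) := Finset.univ.filter (fun i => f i = f 0) with hS
  set s : ℕ := S.card with hs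
  -- every fiber of f over an element of G has cardinality s
  have fibercard : ∀ c ∈ G, (Finset.univ.filter (fun i => f i = c)).card = s := by
    intro c hc
    obtain ⟨i0, -, hi0⟩ := Finset.mem_image.mp hc
    rw [hs, hS]
    apply Finset.card_bij (fun j _ => j - i0)
    · intro a ha
      simp only [Finset.mem_filter, Finset.mem_univ, true_and] at ha ⊢
      rw [← (hiff a i0)]
      rw [ha, hi0]
    · intro a _ a' _ h
      simpa using h
    · intro a ha
      simp only [Finset.mem_filter, Finset.mem_univ, true_and] at ha
      refine ⟨a + i0, ?_, by ring⟩
      simp only [Finset.mem_filter, Finset.mem_univ, true_and]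
      rw [← hi0, hiff (a + i0) i0]
      simpa using ha
  have hn : n = G.card * s := by
    have := Finset.card_eq_sum_card_fiberwise
      (f := f) (s := (Finset.univ : Finset (ZMod n))) (t := G)
      (fun x _ => Finset.mem_image_of_mem f (Finset.mem_univ x))
    rw [Finset.card_univ, ZMod.card] at this
    exact this.trans (by rw [Finset.sum_congr rfl fibercard, Finset.sum_const, smul_eq_mul])
  set corruptI : Finset (ZMod n) :=
    Finset.univ.filter (fun i => f i ∩ L ≠ ∅) with hcI
  set corruptG : Finset (Finset (ZMod n)) :=
    G.filter (fun c => c ∩ L ≠ ∅) with hcG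
  have hcount : corruptI.card = corruptG.card * s := by
    have hmap : ∀ x ∈ corruptI, f x ∈ corruptG := by
      intro x hx
      simp only [hcI, Finset.mem_filter, Finset.mem_univ, true_and] at hx
      exact Finset.mem_filter.mpr ⟨Finset.mem_image_of_mem f (Finset.mem_univ x), hx⟩
    have := Finset.card_eq_sum_card_fiberwise hmap
    rw [this, Finset.sum_congr rfl (fun c hc => ?_), Finset.sum_const, smul_eq_mul]
    have hcc := Finset.mem_filter.mp hc
    have : corruptI.filter (fun i => f i = c) = Finset.univ.filter (fun i => f i = c) := by
      ext i
      simp only [hcI, Finset.filter_filter, Finset.mem_filter, Finset.mem_univ, true_and]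
      constructor
      · rintro ⟨-, h⟩; exact h
      · intro h; exact ⟨h ▸ hcc.2, h⟩
    rw [this, fibercard c hcc.1]
  have hbound : corruptI.card ≤ k * l := by
    have hsub : corruptI ⊆ (b ×ˢ L).image (fun p => p.2 - p.1) := by
      intro i hi
      simp only [hcI, Finset.mem_filter, Finset.mem_univ, true_and] at hi
      obtain ⟨y, hy⟩ := Finset.nonempty_iff_ne_empty.mpr hi
      rw [Finset.mem_inter] at hy
      obtain ⟨x, hx, hxy⟩ := Finset.mem_image.mp hy.1
      refine Finset.mem_image.mpr ⟨(x, y), Finset.mem_product.mpr ⟨hx, hy.2⟩, ?_⟩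
      simp only
      rw [← hxy]; ring
    calc corruptI.card ≤ ((b ×ˢ L).image (fun p => p.2 - p.1)).card :=
          Finset.card_le_card hsub
      _ ≤ (b ×ˢ L).card := Finset.card_image_le
      _ = k * l := by rw [Finset.card_product, hb, hL]
  calc n * corruptG.card = G.card * s * corruptG.card :=
        congrArg (· * corruptG.card) hn
    _ = G.card * (corruptG.card * s) := by ring
    _ = G.card * corruptI.card := by rw [hcount]
    _ ≤ G.card * (k * l) := Nat.mul_le_mul_left _ hbound
    _ = k * l * G.card := by ring
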